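/- For every K ≥ 1, every n ≥ 1, and every parameter vector β : Fin K → ℝ with β k > 0 for all k, the Dirichlet–multinomial allocation probabilities sum to one: Σ_{z : Fin n → Fin K} (Γ(B)/Γ(B + n)) · ∏_{k ∈ Fin K} Γ(β k + n_k(z))/Γ(β k) = 1, where B = Σ_k β k. -/
import Mathlib

open Finset

/-- Number of indices `i` with `z i = k`. -/
def nk {n K : ℕ} (z : Fin n → Fin K) (k : Fin K) : ℕ :=
  (Finset.univ.filter (fun i => z i = k)).card

lemma gamma_add_nat (x : ℝ) (hx : 0 < x) (m : ℕ) :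
    Real.Gamma (x + m) = Real.Gamma x * (ascPochhammer ℝ m).eval x := by
  induction m with
  | zero => simp
  | succ m ih =>
    have hne : x + m ≠ 0 := by positivity
    have : (x : ℝ) + (m + 1 : ℕ) = (x + m) + 1 := by push_cast; ring
    rw [this, Real.Gamma_add_one hne, ih, ascPochhammer_succ_eval]
    ring

lemma nk_cons {n K : ℕ} (k0 : Fin K) (z : Fin n → Fin K) (k : Fin K) :
    nk (Fin.cons k0 z) k = (if k0 = k then 1 else 0) + nk z k := by
  simp only [nk, Finset.card_filter]
  rw [Fin.sum_univ_succ]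
  simp

lemma sum_nk {n K : ℕ} (z : Fin n → Fin K) : ∑ k, nk z k = n := by
  have := Finset.card_eq_sum_card_fiberwise
    (f := z) (s := Finset.univ) (t := Finset.univ) (fun i _ => Finset.mem_univ _)
  simpa [nk] using this.symm

lemma main_lemma (K : ℕ) (β : Fin K → ℝ) : ∀ n : ℕ,
    ∑ z : Fin n → Fin K, ∏ k, (ascPochhammer ℝ (nk z k)).eval (β k)
      = (ascPochhammer ℝ n).eval (∑ k, β k) := by
  intro n
  induction n with
  | zero =>
    rw [Finset.sum_eq_single (fun i : Fin 0 => i.elim0)]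
    · simp [nk]
    · intro z _ hz; exact absurd (funext fun i => i.elim0) hz
    · intro h; exact absurd (Finset.mem_univ _) h
  | succ n ih =>
    have e : ∑ z : Fin (n+1) → Fin K, ∏ k, (ascPochhammer ℝ (nk z k)).eval (β k)
        = ∑ k0 : Fin K, ∑ z : Fin n → Fin K,
            ∏ k, (ascPochhammer ℝ (nk (Fin.cons k0 z) k)).eval (β k) := by
      rw [← Finset.sum_product']
      exact Fintype.sum_equiv (Fin.consEquiv (fun _ => Fin K)).symm _ _ (by
        intro z
        simp [Fin.consEquiv])
    rw [e]
    have key : ∀ (k0 : Fin K) (z : Fin n → Fin K),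
        (∏ k, (ascPochhammer ℝ (nk (Fin.cons k0 z) k)).eval (β k))
          = (∏ k, (ascPochhammer ℝ (nk z k)).eval (β k)) * (β k0 + nk z k0) := by
      intro k0 z
      rw [← Finset.mul_prod_erase Finset.univ _ (Finset.mem_univ k0),
          ← Finset.mul_prod_erase Finset.univ
            (fun k => (ascPochhammer ℝ (nk z k)).eval (β k)) (Finset.mem_univ k0)]
      have h1 : nk (Fin.cons k0 z) k0 = nk z k0 + 1 := by
        rw [nk_cons]; simp [add_comm]
      have h2 : ∀ k ∈ Finset.univ.erase k0,
          (ascPochhammer ℝ (nk (Fin.cons k0 z) k)).eval (β k)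
            = (ascPochhammer ℝ (nk z k)).eval (β k) := by
        intro k hk
        rw [nk_cons, if_neg (Finset.ne_of_mem_erase hk).symm, zero_add]
      rw [Finset.prod_congr rfl h2, h1, ascPochhammer_succ_eval]
      ring
    calc ∑ k0 : Fin K, ∑ z : Fin n → Fin K,
            ∏ k, (ascPochhammer ℝ (nk (Fin.cons k0 z) k)).eval (β k)
        = ∑ z : Fin n → Fin K, ∑ k0 : Fin K,
            (∏ k, (ascPochhammer ℝ (nk z k)).eval (β k)) * (β k0 + nk z k0) := by
          rw [Finset.sum_comm]
          exact Finset.sum_congr rfl fun z _ => Finset.sum_congr rfl fun k0 _ => key k0 z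
      _ = ∑ z : Fin n → Fin K,
            (∏ k, (ascPochhammer ℝ (nk z k)).eval (β k)) * ((∑ k, β k) + n) := by
          refine Finset.sum_congr rfl fun z _ => ?_
          rw [← Finset.mul_sum, Finset.sum_add_distrib]
          congr 2
          rw [← Nat.cast_sum, sum_nk]
      _ = (ascPochhammer ℝ (n+1)).eval (∑ k, β k) := by
          rw [← Finset.sum_mul, ih, ascPochhammer_succ_eval]


theorem stmt_7 (K n : ℕ) (hK : 1 ≤ K) (hn : 1 ≤ n) (β : Fin K → ℝ)
    (hβ : ∀ k, 0 < β k) :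
    ∑ z : Fin n → Fin K,
      (Real.Gamma (∑ k, β k) / Real.Gamma ((∑ k, β k) + (n : ℝ))) *
        ∏ k : Fin K, Real.Gamma (β k + (nk z k : ℝ)) / Real.Gamma (β k) = 1 := by
  have hKne : Nonempty (Fin K) := Fin.pos_iff_nonempty.mp hK
  have hB : 0 < ∑ k, β k := Finset.sum_pos (fun k _ => hβ k) Finset.univ_nonempty
  have hBG : Real.Gamma (∑ k, β k) ≠ 0 := (Real.Gamma_pos_of_pos hB).ne'
  have hBnG : Real.Gamma ((∑ k, β k) + n) ≠ 0 := by
    have : (0:ℝ) < (∑ k, β k) + n := by positivity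
    exact (Real.Gamma_pos_of_pos this).ne'
  have step : ∀ z : Fin n → Fin K,
      (∏ k : Fin K, Real.Gamma (β k + (nk z k : ℝ)) / Real.Gamma (β k))
        = ∏ k, (ascPochhammer ℝ (nk z k)).eval (β k) := by
    intro z
    refine Finset.prod_congr rfl fun k _ => ?_
    rw [gamma_add_nat (β k) (hβ k)]
    field_simp [(Real.Gamma_pos_of_pos (hβ k)).ne']
  simp only [step]
  rw [← Finset.mul_sum, main_lemma, div_mul_eq_mul_div, ← gamma_add_nat _ hB, div_self hBnG]
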